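/- Let (X,ρ) be a compact metric space, f : X → X continuous, k, h ∈ ℕ, and x ∈ X. Then entr⁺(f^k, f^h(x)) = entr⁺(f^k, x) and entr⁻(f^k, f^h(x)) = entr⁻(f^k, x). -/

import Mathlib

open Filter Topology Set MeasureTheory

section Defs

variable {X : Type*} [MetricSpace X]

/-- Bowen's metric `ρ^f_m(y,z) = max_{0 ≤ i < m} ρ(f^i y, f^i z)`. -/
noncomputable def bowenDist (f : X → X) (m : ℕ) (y z : X) : ℝ :=
  (((Finset.range m).sup fun i => nndist (f^[i] y) (f^[i] z)) : NNReal)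

open scoped Classical in
/-- The correlation sum `C^f_m(x,n,ε)`. -/
noncomputable def corrSum (f : X → X) (m : ℕ) (x : X) (n : ℕ) (ε : ℝ) : ℝ :=
  (((Finset.range n ×ˢ Finset.range n).filter fun q =>
      bowenDist f m (f^[q.1] x) (f^[q.2] x) ≤ ε).card : ℝ) / (n : ℝ) ^ 2

/-- `ĉ^f_m(x,ε) = limsup_{n→∞} C^f_m(x,n,ε)`. -/
noncomputable def corrUpper (f : X → X) (m : ℕ) (x : X) (ε : ℝ) : ℝ :=
  Filter.limsup (fun n : ℕ => corrSum f m x n ε) Filter.atTop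

/-- `č^f_m(x,ε) = liminf_{n→∞} C^f_m(x,n,ε)`. -/
noncomputable def corrLower (f : X → X) (m : ℕ) (x : X) (ε : ℝ) : ℝ :=
  Filter.liminf (fun n : ℕ => corrSum f m x n ε) Filter.atTop

/-- The upper local correlation entropy `entr⁺(f,x) = lim_{ε→0⁺} limsup_m (−1/m) log č^f_m(x,ε)`;
the limit as `ε → 0⁺` exists by monotonicity in `ε`, and is expressed here as a `limsup`
along `𝓝[>] 0` (with values in `EReal`). -/
noncomputable def entrUpper (f : X → X) (x : X) : EReal :=
  Filter.limsup (fun ε : ℝ =>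
      Filter.limsup (fun m : ℕ => ((-(1 / (m : ℝ)) * Real.log (corrLower f m x ε) : ℝ) : EReal))
        Filter.atTop)
    (𝓝[>] (0 : ℝ))

/-- The lower local correlation entropy `entr⁻(f,x) = lim_{ε→0⁺} liminf_m (−1/m) log ĉ^f_m(x,ε)`. -/
noncomputable def entrLower (f : X → X) (x : X) : EReal :=
  Filter.limsup (fun ε : ℝ =>
      Filter.liminf (fun m : ℕ => ((-(1 / (m : ℝ)) * Real.log (corrUpper f m x ε) : ℝ) : EReal))
        Filter.atTop)
    (𝓝[>] (0 : ℝ))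

/-- `r_m(ε,K)`: the smallest cardinality of a subset of `K` which `(m,ε)`-spans `K`. -/
noncomputable def spanNumOn (f : X → X) (K : Set X) (m : ℕ) (ε : ℝ) : ℕ :=
  sInf {k : ℕ | ∃ A : Finset X, ↑A ⊆ K ∧ A.card = k ∧ ∀ y ∈ K, ∃ a ∈ A, bowenDist f m y a ≤ ε}

/-- Bowen's topological entropy of `f` on `K` (for `K = univ`, of `f` itself;
for closed invariant `K`, of the restriction of `f` to `K`). -/
noncomputable def topEntropyOn (f : X → X) (K : Set X) : EReal :=
  Filter.limsup (fun ε : ℝ =>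
      Filter.limsup (fun n : ℕ => (((1 / (n : ℝ)) * Real.log (spanNumOn f K n ε) : ℝ) : EReal))
        Filter.atTop)
    (𝓝[>] (0 : ℝ))

end Defs

section AuxLemmas

variable {X : Type*} [MetricSpace X]

lemma bowenDist_le_iff {f : X → X} {m : ℕ} {y z : X} {ε : ℝ} (hε : 0 ≤ ε) :
    bowenDist f m y z ≤ ε ↔ ∀ i < m, dist (f^[i] y) (f^[i] z) ≤ ε := by
  rw [bowenDist, ← Real.coe_toNNReal ε hε, NNReal.coe_le_coe, Finset.sup_le_iff]
  constructor
  · intro H i hi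
    have := H i (Finset.mem_range.2 hi)
    rwa [← NNReal.coe_le_coe, coe_nndist] at this
  · intro H i hi
    rw [← NNReal.coe_le_coe, coe_nndist]
    exact H i (Finset.mem_range.1 hi)

lemma corrSum_nonneg (f : X → X) (m : ℕ) (x : X) (n : ℕ) (ε : ℝ) :
    0 ≤ corrSum f m x n ε := by
  unfold corrSum; positivity

lemma corrSum_le_one (f : X → X) (m : ℕ) (x : X) (n : ℕ) (ε : ℝ) :
    corrSum f m x n ε ≤ 1 := by
  classical
  unfold corrSum
  rcases Nat.eq_zero_or_pos n with h | h
  · simp [h]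
  · rw [div_le_one (by positivity)]
    calc ((Finset.filter _ _).card : ℝ) ≤ ((Finset.range n ×ˢ Finset.range n).card : ℝ) := by
          exact_mod_cast Finset.card_le_card (Finset.filter_subset _ _)
      _ = (n:ℝ)^2 := by simp [Finset.card_product, sq]

lemma corrSum_mono_eps (f : X → X) (m : ℕ) (x : X) (n : ℕ) {ε δ : ℝ} (h : ε ≤ δ) :
    corrSum f m x n ε ≤ corrSum f m x n δ := by
  classical
  unfold corrSum
  have hcard : ((Finset.filter (fun q => bowenDist f m (f^[q.1] x) (f^[q.2] x) ≤ ε)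
      (Finset.range n ×ˢ Finset.range n)).card : ℝ)
      ≤ ((Finset.filter (fun q => bowenDist f m (f^[q.1] x) (f^[q.2] x) ≤ δ)
      (Finset.range n ×ˢ Finset.range n)).card : ℝ) := by
    exact_mod_cast Finset.card_le_card (Finset.monotone_filter_right _ (fun q _ hq => le_trans hq h))
  rcases Nat.eq_zero_or_pos n with hn | hn
  · simp [hn]
  · exact div_le_div_of_nonneg_right hcard (by positivity)


/-- uniform modulus for the Bowen metric -/
lemma exists_bowen_modulus [CompactSpace X] {g : X → X} (hg : Continuous g) (m : ℕ)
    {δ : ℝ} (hδ : 0 < δ) :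
    ∃ η > 0, ∀ y z : X, dist y z < η → bowenDist g m y z ≤ δ := by
  have Hu : ∀ i : ℕ, UniformContinuous (g^[i]) :=
    fun i => CompactSpace.uniformContinuous_of_continuous (hg.iterate i)
  have key : ∀ i : ℕ, ∃ η > 0, ∀ y z : X, dist y z < η → dist (g^[i] y) (g^[i] z) < δ := by
    intro i
    obtain ⟨η, hη, H⟩ := Metric.uniformContinuous_iff.1 (Hu i) δ hδ
    exact ⟨η, hη, fun y z h => H h⟩
  choose η hη H using key
  rcases Nat.eq_zero_or_pos m with hm | hm
  · exact ⟨1, one_pos, fun y z _ => by simp [bowenDist, hm, hδ.le]⟩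
  · have hne : (Finset.range m).Nonempty := Finset.nonempty_range_iff.2 hm.ne'
    refine ⟨(Finset.range m).inf' hne η, ?_, ?_⟩
    · exact (Finset.lt_inf'_iff hne).2 fun i _ => hη i
    · intro y z hyz
      rw [bowenDist_le_iff hδ.le]
      intro i hi
      exact (H i y z (lt_of_lt_of_le hyz (Finset.inf'_le η (Finset.mem_range.2 hi)))).le

lemma corrSum_pos [CompactSpace X] {g : X → X} (hg : Continuous g) (m : ℕ)
    {δ : ℝ} (hδ : 0 < δ) (x : X) :
    ∃ c > 0, ∀ n : ℕ, 0 < n → c ≤ corrSum g m x n δ := by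
  classical
  obtain ⟨η, hη, Hη⟩ := exists_bowen_modulus hg m hδ
  obtain ⟨T, hT⟩ := IsCompact.elim_finite_subcover isCompact_univ
      (fun t : X => Metric.ball t (η / 2)) (fun _ => Metric.isOpen_ball)
      (fun y _ => Set.mem_iUnion.2 ⟨y, Metric.mem_ball_self (by linarith)⟩)
  have hφ : ∀ i : ℕ, ∃ t ∈ T, dist (g^[i] x) t < η / 2 := by
    intro i
    have := hT (Set.mem_univ (g^[i] x))
    simp only [Set.mem_iUnion, Metric.mem_ball, exists_prop] at this
    exact this
  choose φ hφT hφd using hφ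
  have hTpos : 0 < T.card := Finset.card_pos.2 ⟨φ 0, hφT 0⟩
  refine ⟨1 / T.card, by positivity, fun n hn => ?_⟩
  set fib : X → Finset ℕ := fun t => (Finset.range n).filter (fun i => φ i = t) with hfib
  set S : Finset (ℕ × ℕ) :=
    (Finset.range n ×ˢ Finset.range n).filter (fun q => φ q.1 = φ q.2) with hS
  have hsub : S ⊆ (Finset.range n ×ˢ Finset.range n).filter
      (fun q => bowenDist g m (g^[q.1] x) (g^[q.2] x) ≤ δ) := by
    intro q hq
    rw [hS, Finset.mem_filter] at hq
    rw [Finset.mem_filter]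
    refine ⟨hq.1, Hη _ _ ?_⟩
    calc dist (g^[q.1] x) (g^[q.2] x)
        ≤ dist (g^[q.1] x) (φ q.1) + dist (φ q.2) (g^[q.2] x) := by
          rw [hq.2]; exact dist_triangle_right _ _ _ |>.trans (by rw [dist_comm (φ q.2)])
      _ < η / 2 + η / 2 := add_lt_add (hφd q.1) (by rw [dist_comm]; exact hφd q.2)
      _ = η := by ring
  have hsum : ∑ t ∈ T, (fib t).card = n := by
    rw [← Finset.card_range n]
    exact (Finset.card_eq_sum_card_fiberwise (fun i _ => hφT i)).symm
  have hScard : S.card = ∑ t ∈ T, (fib t).card ^ 2 := by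
    have h1 : S.card = ∑ t ∈ T, (S.filter (fun q => φ q.1 = t)).card :=
      Finset.card_eq_sum_card_fiberwise (fun q hq => by
        exact hφT q.1)
    rw [h1]
    refine Finset.sum_congr rfl fun t _ => ?_
    have : S.filter (fun q => φ q.1 = t) = fib t ×ˢ fib t := by
      ext q
      simp only [hS, hfib, Finset.mem_filter, Finset.mem_product, Finset.mem_range]
      constructor
      · rintro ⟨⟨⟨h1, h2⟩, h3⟩, h4⟩
        exact ⟨⟨h1, h4⟩, ⟨h2, h3 ▸ h4⟩⟩
      · rintro ⟨⟨h1, h4⟩, ⟨h2, h5⟩⟩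
        exact ⟨⟨⟨h1, h2⟩, h4.trans h5.symm⟩, h4⟩
    rw [this, Finset.card_product, sq]
  have hCS : (n : ℝ) ^ 2 ≤ (T.card : ℝ) * S.card := by
    have := sq_sum_le_card_mul_sum_sq (s := T) (f := fun t => ((fib t).card : ℝ))
    have e1 : (∑ t ∈ T, ((fib t).card : ℝ)) = (n : ℝ) := by exact_mod_cast hsum
    have e2 : (∑ t ∈ T, ((fib t).card : ℝ) ^ 2) = (S.card : ℝ) := by
      rw [hScard]; push_cast; ring
    rw [e1, e2] at this
    exact this
  unfold corrSum
  rw [div_le_div_iff₀ (by positivity) (by positivity), one_mul]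
  calc (n : ℝ) ^ 2 ≤ (T.card : ℝ) * S.card := hCS
    _ ≤ ((Finset.filter (fun q => bowenDist g m (g^[q.1] x) (g^[q.2] x) ≤ δ)
          (Finset.range n ×ˢ Finset.range n)).card : ℝ) * T.card := by
        rw [mul_comm]
        have h := Finset.card_le_card hsub
        gcongr

lemma csum_bddU (f : X → X) (m : ℕ) (x : X) (ε : ℝ) :
    IsBoundedUnder (· ≤ ·) atTop (fun n : ℕ => corrSum f m x n ε) :=
  Filter.isBoundedUnder_of ⟨1, fun n => corrSum_le_one f m x n ε⟩

lemma csum_bddL (f : X → X) (m : ℕ) (x : X) (ε : ℝ) :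
    IsBoundedUnder (· ≥ ·) atTop (fun n : ℕ => corrSum f m x n ε) :=
  Filter.isBoundedUnder_of ⟨0, fun n => corrSum_nonneg f m x n ε⟩

lemma csum_cobddU (f : X → X) (m : ℕ) (x : X) (ε : ℝ) :
    IsCoboundedUnder (· ≤ ·) atTop (fun n : ℕ => corrSum f m x n ε) :=
  (csum_bddL f m x ε).isCoboundedUnder_le

lemma csum_cobddL (f : X → X) (m : ℕ) (x : X) (ε : ℝ) :
    IsCoboundedUnder (· ≥ ·) atTop (fun n : ℕ => corrSum f m x n ε) :=
  (csum_bddU f m x ε).isCoboundedUnder_ge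

lemma corrLower_le_corrUpper (f : X → X) (m : ℕ) (x : X) (ε : ℝ) :
    corrLower f m x ε ≤ corrUpper f m x ε :=
  liminf_le_limsup (csum_bddU f m x ε) (csum_bddL f m x ε)

lemma corrLower_mono_eps (f : X → X) (m : ℕ) (x : X) {ε δ : ℝ} (h : ε ≤ δ) :
    corrLower f m x ε ≤ corrLower f m x δ :=
  liminf_le_liminf (Filter.Eventually.of_forall fun n => corrSum_mono_eps f m x n h)
    (csum_bddL f m x ε) (csum_cobddL f m x δ)

lemma corrUpper_mono_eps (f : X → X) (m : ℕ) (x : X) {ε δ : ℝ} (h : ε ≤ δ) :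
    corrUpper f m x ε ≤ corrUpper f m x δ :=
  limsup_le_limsup (Filter.Eventually.of_forall fun n => corrSum_mono_eps f m x n h)
    (csum_cobddU f m x ε) (csum_bddU f m x δ)

lemma corrLower_pos [CompactSpace X] {g : X → X} (hg : Continuous g) (m : ℕ)
    {δ : ℝ} (hδ : 0 < δ) (x : X) : 0 < corrLower g m x δ := by
  obtain ⟨c, hc, H⟩ := corrSum_pos hg m hδ x
  have : c ≤ corrLower g m x δ :=
    le_liminf_of_le (csum_cobddL g m x δ)
      ((eventually_ge_atTop 1).mono fun n hn => H n hn)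
  linarith

lemma corrUpper_pos [CompactSpace X] {g : X → X} (hg : Continuous g) (m : ℕ)
    {δ : ℝ} (hδ : 0 < δ) (x : X) : 0 < corrUpper g m x δ :=
  lt_of_lt_of_le (corrLower_pos hg m hδ x) (corrLower_le_corrUpper g m x δ)

lemma corrSum_le_corrSum_of_imp {g : X → X} {m : ℕ} {x x' : X} {δ ε : ℝ} (n : ℕ)
    (h : ∀ i j : ℕ, bowenDist g m (g^[i] x) (g^[j] x) ≤ δ →
      bowenDist g m (g^[i] x') (g^[j] x') ≤ ε) :
    corrSum g m x n δ ≤ corrSum g m x' n ε := by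
  classical
  unfold corrSum
  have hcard : ((Finset.filter (fun q : ℕ × ℕ => bowenDist g m (g^[q.1] x) (g^[q.2] x) ≤ δ)
      (Finset.range n ×ˢ Finset.range n)).card : ℝ)
      ≤ ((Finset.filter (fun q : ℕ × ℕ => bowenDist g m (g^[q.1] x') (g^[q.2] x') ≤ ε)
      (Finset.range n ×ˢ Finset.range n)).card : ℝ) := by
    exact_mod_cast Finset.card_le_card
      (Finset.monotone_filter_right _ (fun (q : ℕ × ℕ) _ hq => h q.1 q.2 hq))
  rcases Nat.eq_zero_or_pos n with hn | hn
  · simp [hn]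
  · exact div_le_div_of_nonneg_right hcard (by positivity)

/-- commuting iterate identity -/
lemma iter_comm {g F : X → X} (hcomm : ∀ y, F (g y) = g (F y)) :
    ∀ (i : ℕ) (y : X), g^[i] (F y) = F (g^[i] y) := by
  intro i
  induction i with
  | zero => simp
  | succ j ih =>
    intro y
    rw [Function.iterate_succ_apply', Function.iterate_succ_apply', ih, hcomm]

/-- push comparison: `C(x, δ) ≤ C(F x, ε)` for suitable δ -/
lemma corr_push [CompactSpace X] {g F : X → X} (hF : Continuous F)
    (hcomm : ∀ y, F (g y) = g (F y)) {ε : ℝ} (hε : 0 < ε) :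
    ∃ δ > 0, ∀ (m : ℕ) (x : X) (n : ℕ),
      corrSum g m x n δ ≤ corrSum g m (F x) n ε := by
  obtain ⟨δ0, hδ0, H⟩ := Metric.uniformContinuous_iff.1
    (CompactSpace.uniformContinuous_of_continuous hF) ε hε
  refine ⟨δ0 / 2, by linarith, fun m x n => ?_⟩
  apply corrSum_le_corrSum_of_imp
  intro i j hb
  rw [bowenDist_le_iff (by linarith)] at hb
  rw [bowenDist_le_iff hε.le]
  intro l hl
  rw [iter_comm hcomm i x, iter_comm hcomm j x, iter_comm hcomm l, iter_comm hcomm l]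
  exact (H (lt_of_le_of_lt (hb l hl) (by linarith))).le


/-- counting inequality for the shift -/
lemma corrSum_shift_card {g : X → X} (m s : ℕ) (x : X) (ε : ℝ) (n : ℕ) :
    (((Finset.range (n + s) ×ˢ Finset.range (n + s)).filter fun q : ℕ × ℕ =>
        bowenDist g m (g^[q.1] x) (g^[q.2] x) ≤ ε).card : ℝ)
      ≤ (((Finset.range n ×ˢ Finset.range n).filter fun q : ℕ × ℕ =>
        bowenDist g m (g^[q.1] (g^[s] x)) (g^[q.2] (g^[s] x)) ≤ ε).card : ℝ)
        + 2 * s * (n + s) := by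
  classical
  set Q := (Finset.range (n + s) ×ˢ Finset.range (n + s)).filter fun q : ℕ × ℕ =>
      bowenDist g m (g^[q.1] x) (g^[q.2] x) ≤ ε with hQ
  set P := (Finset.range n ×ˢ Finset.range n).filter fun q : ℕ × ℕ =>
      bowenDist g m (g^[q.1] (g^[s] x)) (g^[q.2] (g^[s] x)) ≤ ε with hP
  set bad : Finset (ℕ × ℕ) := (Finset.range s ×ˢ Finset.range (n + s)) ∪
      (Finset.range (n + s) ×ˢ Finset.range s) with hbad
  have hsub : Q ⊆ P.image (fun q : ℕ × ℕ => (q.1 + s, q.2 + s)) ∪ bad := by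
    intro q hq
    rw [hQ, Finset.mem_filter, Finset.mem_product, Finset.mem_range, Finset.mem_range] at hq
    obtain ⟨⟨h1, h2⟩, h3⟩ := hq
    rcases lt_or_ge q.1 s with hs1 | hs1
    · exact Finset.mem_union_right _ (Finset.mem_union_left _ (Finset.mem_product.2
        ⟨Finset.mem_range.2 hs1, Finset.mem_range.2 h2⟩))
    rcases lt_or_ge q.2 s with hs2 | hs2
    · exact Finset.mem_union_right _ (Finset.mem_union_right _ (Finset.mem_product.2
        ⟨Finset.mem_range.2 h1, Finset.mem_range.2 hs2⟩))
    apply Finset.mem_union_left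
    apply Finset.mem_image.2
    refine ⟨(q.1 - s, q.2 - s), ?_, ?_⟩
    · rw [hP, Finset.mem_filter, Finset.mem_product]
      have e1 : g^[q.1 - s] (g^[s] x) = g^[q.1] x := by
        rw [← Function.iterate_add_apply, Nat.sub_add_cancel hs1]
      have e2 : g^[q.2 - s] (g^[s] x) = g^[q.2] x := by
        rw [← Function.iterate_add_apply, Nat.sub_add_cancel hs2]
      refine ⟨⟨Finset.mem_range.2 (by omega), Finset.mem_range.2 (by omega)⟩, ?_⟩
      simpa [e1, e2] using h3
    · show (q.1 - s + s, q.2 - s + s) = q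
      rw [Nat.sub_add_cancel hs1, Nat.sub_add_cancel hs2]
  have hcard : Q.card ≤ P.card + 2 * s * (n + s) := by
    calc Q.card ≤ (P.image (fun q : ℕ × ℕ => (q.1 + s, q.2 + s)) ∪ bad).card :=
          Finset.card_le_card hsub
      _ ≤ (P.image (fun q : ℕ × ℕ => (q.1 + s, q.2 + s))).card + bad.card :=
          Finset.card_union_le _ _
      _ ≤ P.card + bad.card := Nat.add_le_add_right Finset.card_image_le _
      _ ≤ P.card + 2 * s * (n + s) := by
          have h1 : bad.card ≤ s * (n + s) + (n + s) * s :=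
            (Finset.card_union_le _ _).trans (by simp [Finset.card_product])
          have h2 : s * (n + s) + (n + s) * s = 2 * s * (n + s) := by ring
          omega
  calc (Q.card : ℝ) ≤ ((P.card + 2 * s * (n + s) : ℕ) : ℝ) := by exact_mod_cast hcard
    _ = (P.card : ℝ) + 2 * s * (n + s) := by push_cast; ring

/-- `C_m(x, n+s, ε) ≤ C_m(g^s x, n, ε) + 2s/(n+s)` for `n ≥ 1` -/
lemma corrSum_shift {g : X → X} (m s : ℕ) (x : X) (ε : ℝ) {n : ℕ} (hn : 0 < n) :
    corrSum g m x (n + s) ε ≤ corrSum g m (g^[s] x) n ε + 2 * s / (n + s) := by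
  classical
  have hc := corrSum_shift_card (g := g) m s x ε n
  unfold corrSum
  set a : ℝ := (((Finset.range (n + s) ×ˢ Finset.range (n + s)).filter fun q : ℕ × ℕ =>
      bowenDist g m (g^[q.1] x) (g^[q.2] x) ≤ ε).card : ℝ) with ha
  set b : ℝ := (((Finset.range n ×ˢ Finset.range n).filter fun q : ℕ × ℕ =>
      bowenDist g m (g^[q.1] (g^[s] x)) (g^[q.2] (g^[s] x)) ≤ ε).card : ℝ) with hb
  have hb0 : 0 ≤ b := by rw [hb]; positivity
  have hn' : (0:ℝ) < (n:ℝ) := by exact_mod_cast hn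
  have hN' : (0:ℝ) < ((n + s : ℕ):ℝ) := by positivity
  push_cast at hc ⊢
  have step1 : a / ((n:ℝ) + s)^2 ≤ (b + 2 * s * ((n:ℝ) + s)) / ((n:ℝ) + s)^2 := by
    gcongr
  have step2 : (b + 2 * s * ((n:ℝ) + s)) / ((n:ℝ) + s)^2
      = b / ((n:ℝ) + s)^2 + 2 * s / ((n:ℝ) + s) := by
    field_simp
  have step3 : b / ((n:ℝ) + s)^2 ≤ b / (n:ℝ)^2 := by
    have hsq : (n:ℝ)^2 ≤ ((n:ℝ) + s)^2 := by nlinarith [Nat.cast_nonneg (α := ℝ) s]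
    exact div_le_div_of_nonneg_left hb0 (by positivity) hsq
  linarith


lemma err_tendsto (s : ℕ) : Filter.Tendsto (fun n : ℕ => 2 * (s:ℝ) / ((n:ℝ) + s)) Filter.atTop (nhds 0) := by
  apply Filter.Tendsto.div_atTop tendsto_const_nhds
  exact Filter.tendsto_atTop_add_const_right _ _ tendsto_natCast_atTop_atTop

lemma corrLower_shift (g : X → X) (m s : ℕ) (x : X) (ε : ℝ) :
    corrLower g m x ε ≤ corrLower g m (g^[s] x) ε := by
  by_contra hlt
  push_neg at hlt
  obtain ⟨c, hc1, hc2⟩ := exists_between hlt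
  obtain ⟨c', hcc', hc'⟩ := exists_between hc2
  have hev1 : ∀ᶠ N in atTop, c' < corrSum g m x N ε :=
    eventually_lt_of_lt_liminf hc' (csum_bddL g m x ε)
  have hev1' : ∀ᶠ n in atTop, c' < corrSum g m x (n + s) ε :=
    (tendsto_add_atTop_nat s).eventually hev1
  have hev2 : ∀ᶠ n : ℕ in atTop, 2 * (s:ℝ) / ((n:ℝ) + s) < c' - c :=
    (err_tendsto s).eventually_lt_const (by linarith)
  have hev3 : ∀ᶠ n in atTop, c ≤ corrSum g m (g^[s] x) n ε := by
    filter_upwards [hev1', hev2, eventually_ge_atTop 1] with n h1 h2 h3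
    have := corrSum_shift (g := g) m s x ε (n := n) (by omega)
    linarith
  have : c ≤ corrLower g m (g^[s] x) ε :=
    le_liminf_of_le (csum_cobddL g m (g^[s] x) ε) hev3
  linarith

lemma corrUpper_shift (g : X → X) (m s : ℕ) (x : X) (ε : ℝ) :
    corrUpper g m x ε ≤ corrUpper g m (g^[s] x) ε := by
  by_contra hlt
  push_neg at hlt
  obtain ⟨c, hc1, hc2⟩ := exists_between hlt
  obtain ⟨c', hcc', hc'⟩ := exists_between hc2
  have hfrN : ∃ᶠ N in atTop, c' < corrSum g m x N ε :=
    frequently_lt_of_lt_limsup (csum_cobddU g m x ε) hc'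
  have hfr : ∃ᶠ n : ℕ in atTop, c' < corrSum g m x (n + s) ε := by
    rw [frequently_atTop] at hfrN ⊢
    intro n0
    obtain ⟨N, hN, hcN⟩ := hfrN (n0 + s)
    refine ⟨N - s, by omega, ?_⟩
    have hNs : N - s + s = N := by omega
    rw [hNs]
    exact hcN
  have hev2 : ∀ᶠ n : ℕ in atTop, 2 * (s:ℝ) / ((n:ℝ) + s) < c' - c :=
    (err_tendsto s).eventually_lt_const (by linarith)
  have hfr3 : ∃ᶠ n in atTop, c ≤ corrSum g m (g^[s] x) n ε := by
    refine (hfr.and_eventually (hev2.and (eventually_ge_atTop 1))).mono ?_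
    rintro n ⟨h1, h2, h3⟩
    have := corrSum_shift (g := g) m s x ε (n := n) (by omega)
    linarith
  have : c ≤ corrUpper g m (g^[s] x) ε :=
    le_limsup_of_frequently_le hfr3 (csum_bddU g m (g^[s] x) ε)
  linarith


lemma corrLower_le_of_forall {g : X → X} {m : ℕ} {x x' : X} {δ ε : ℝ}
    (H : ∀ n, corrSum g m x n δ ≤ corrSum g m x' n ε) :
    corrLower g m x δ ≤ corrLower g m x' ε :=
  liminf_le_liminf (Filter.Eventually.of_forall H) (csum_bddL g m x δ) (csum_cobddL g m x' ε)

lemma corrUpper_le_of_forall {g : X → X} {m : ℕ} {x x' : X} {δ ε : ℝ}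
    (H : ∀ n, corrSum g m x n δ ≤ corrSum g m x' n ε) :
    corrUpper g m x δ ≤ corrUpper g m x' ε :=
  limsup_le_limsup (Filter.Eventually.of_forall H) (csum_cobddU g m x δ) (csum_bddU g m x' ε)

lemma term_le {a b : ℝ} (m : ℕ) (ha : 0 < a) (hab : a ≤ b) :
    ((-(1 / (m : ℝ)) * Real.log b : ℝ) : EReal) ≤ ((-(1 / (m : ℝ)) * Real.log a : ℝ) : EReal) := by
  apply EReal.coe_le_coe_iff.2
  apply mul_le_mul_of_nonpos_left (Real.log_le_log ha hab)
  simp only [neg_nonpos]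
  positivity

/-- generic comparison of the `ε → 0⁺` limsups -/
lemma entr_le_of_corr (c c' : ℕ → ℝ → ℝ) (L : (ℕ → EReal) → EReal)
    (hL : ∀ u v : ℕ → EReal, (∀ n, u n ≤ v n) → L u ≤ L v)
    (hmono : ∀ m : ℕ, ∀ {δ δ' : ℝ}, δ ≤ δ' → c' m δ ≤ c' m δ')
    (hpos : ∀ m : ℕ, ∀ {δ : ℝ}, 0 < δ → 0 < c' m δ)
    (hcomp : ∀ ε : ℝ, 0 < ε → ∃ δ > 0, ∀ m, c' m δ ≤ c m ε) :
    Filter.limsup (fun ε : ℝ =>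
        L (fun m => ((-(1 / (m : ℝ)) * Real.log (c m ε) : ℝ) : EReal))) (𝓝[>] (0:ℝ))
      ≤ Filter.limsup (fun ε : ℝ =>
        L (fun m => ((-(1 / (m : ℝ)) * Real.log (c' m ε) : ℝ) : EReal))) (𝓝[>] (0:ℝ)) := by
  set G : ℝ → EReal := fun ε => L (fun m => ((-(1 / (m : ℝ)) * Real.log (c m ε) : ℝ) : EReal))
    with hG
  set F : ℝ → EReal := fun ε => L (fun m => ((-(1 / (m : ℝ)) * Real.log (c' m ε) : ℝ) : EReal))
    with hF
  have step3 : ∀ δ : ℝ, 0 < δ → F δ ≤ Filter.limsup F (𝓝[>] (0:ℝ)) := by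
    intro δ hδ
    have hev : ∀ᶠ ε in 𝓝[>] (0:ℝ), F δ ≤ F ε := by
      filter_upwards [Ioo_mem_nhdsGT_of_mem (Set.left_mem_Ico.2 hδ)] with ε hε
      exact hL _ _ fun m => term_le m (hpos m hε.1) (hmono m hε.2.le)
    exact le_trans (le_liminf_of_le (by isBoundedDefault) hev) (liminf_le_limsup)
  have h1 : Filter.limsup G (𝓝[>] (0:ℝ)) ≤ ⨆ ε ∈ Set.Ioi (0:ℝ), G ε := by
    apply limsup_le_of_le (by isBoundedDefault)
    filter_upwards [eventually_mem_nhdsWithin] with ε hε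
    exact le_biSup _ hε
  refine h1.trans (iSup₂_le fun ε hε => ?_)
  obtain ⟨δ, hδ, hcm⟩ := hcomp ε hε
  have hGF : G ε ≤ F δ :=
    hL _ _ fun m => term_le m (hpos m hδ) (hcm m)
  exact hGF.trans (step3 δ hδ)


lemma err2_tendsto (s : ℕ) :
    Filter.Tendsto (fun n : ℕ => (2 * (s:ℝ) + (s:ℝ)^2) / (n:ℝ)) Filter.atTop (nhds 0) :=
  tendsto_const_div_atTop_nhds_zero_nat _

/-- easy counting direction: `C_m(g^s x, n, ε) ≤ C_m(x, n+s, ε) + (2s+s²)/n` -/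
lemma corrSum_shift' {g : X → X} (m s : ℕ) (x : X) (ε : ℝ) {n : ℕ} (hn : 0 < n) :
    corrSum g m (g^[s] x) n ε ≤ corrSum g m x (n + s) ε + (2 * (s:ℝ) + (s:ℝ)^2) / (n:ℝ) := by
  classical
  set P := (Finset.range n ×ˢ Finset.range n).filter fun q : ℕ × ℕ =>
      bowenDist g m (g^[q.1] (g^[s] x)) (g^[q.2] (g^[s] x)) ≤ ε with hP
  set Q := (Finset.range (n + s) ×ˢ Finset.range (n + s)).filter fun q : ℕ × ℕ =>
      bowenDist g m (g^[q.1] x) (g^[q.2] x) ≤ ε with hQ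
  have hcard : P.card ≤ Q.card := by
    apply Finset.card_le_card_of_injOn (fun q : ℕ × ℕ => (q.1 + s, q.2 + s))
    · intro q hq
      rw [hP, Finset.mem_coe, Finset.mem_filter, Finset.mem_product, Finset.mem_range, Finset.mem_range] at hq
      beta_reduce
      rw [hQ, Finset.mem_coe, Finset.mem_filter, Finset.mem_product, Finset.mem_range, Finset.mem_range]
      obtain ⟨⟨h1, h2⟩, h3⟩ := hq
      refine ⟨⟨by omega, by omega⟩, ?_⟩
      have e1 : g^[q.1 + s] x = g^[q.1] (g^[s] x) := Function.iterate_add_apply g q.1 s x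
      have e2 : g^[q.2 + s] x = g^[q.2] (g^[s] x) := Function.iterate_add_apply g q.2 s x
      simpa [e1, e2] using h3
    · intro a _ b _ hab
      have h1 : a.1 + s = b.1 + s := congrArg Prod.fst hab
      have h2 : a.2 + s = b.2 + s := congrArg Prod.snd hab
      exact Prod.ext (by omega) (by omega)
  have hQle : (Q.card : ℝ) ≤ ((n + s : ℕ) : ℝ)^2 := by
    have hsubQ : Q ⊆ Finset.range (n+s) ×ˢ Finset.range (n+s) := by
      rw [hQ]; exact Finset.filter_subset _ _
    have := Finset.card_le_card hsubQ
    calc (Q.card : ℝ) ≤ ((Finset.range (n+s) ×ˢ Finset.range (n+s)).card : ℝ) := by exact_mod_cast this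
      _ = ((n + s : ℕ) : ℝ)^2 := by simp [Finset.card_product, sq]
  unfold corrSum
  have hn2 : (0:ℝ) < (n:ℝ)^2 := by positivity
  have hN2 : (0:ℝ) < ((n+s:ℕ):ℝ)^2 := by positivity
  set q : ℝ := (Q.card : ℝ) with hq
  have hq0 : 0 ≤ q := by rw [hq]; positivity
  have hn0 : (0:ℝ) < (n:ℝ) := by exact_mod_cast hn
  have step0 : ((P.card : ℝ)) / (n:ℝ)^2 ≤ q / (n:ℝ)^2 := by
    have hPQ : ((P.card : ℝ)) ≤ q := by rw [hq]; exact_mod_cast hcard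
    exact div_le_div_of_nonneg_right hPQ hn2.le
  have key : q * ((n+s:ℕ):ℝ)^2 ≤ q * (n:ℝ)^2 + ((2*(s:ℝ) + (s:ℝ)^2) * (n:ℝ)) * ((n+s:ℕ):ℝ)^2 := by
    have hcast : ((n+s:ℕ):ℝ) = (n:ℝ) + s := by push_cast; ring
    rw [hcast] at hQle ⊢
    have hn1 : (1:ℝ) ≤ (n:ℝ) := by exact_mod_cast hn
    have hs0 : (0:ℝ) ≤ (s:ℝ) := Nat.cast_nonneg s
    have h1 : q * ((n:ℝ)+s)^2 - q * (n:ℝ)^2 = q * (2*s*(n:ℝ) + (s:ℝ)^2) := by ring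
    have h2 : q * (2*s*(n:ℝ)+(s:ℝ)^2) ≤ ((n:ℝ)+s)^2 * (2*s*(n:ℝ)+(s:ℝ)^2) :=
      mul_le_mul_of_nonneg_right hQle (by positivity)
    have h3 : 2*(s:ℝ)*(n:ℝ) + (s:ℝ)^2 ≤ (2*(s:ℝ)+(s:ℝ)^2)*(n:ℝ) := by nlinarith
    have h4 : ((n:ℝ)+s)^2 * (2*(s:ℝ)*(n:ℝ)+(s:ℝ)^2) ≤ ((n:ℝ)+s)^2 * ((2*(s:ℝ)+(s:ℝ)^2)*(n:ℝ)) :=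
      mul_le_mul_of_nonneg_left h3 (by positivity)
    have h5 : ((n:ℝ)+s)^2 * ((2*(s:ℝ)+(s:ℝ)^2)*(n:ℝ)) = ((2*(s:ℝ)+(s:ℝ)^2)*(n:ℝ))*((n:ℝ)+s)^2 := by
      ring
    linarith
  have step1 : q / (n:ℝ)^2 ≤ q / ((n+s:ℕ):ℝ)^2 + (2*(s:ℝ) + (s:ℝ)^2) / (n:ℝ) := by
    rw [div_add_div _ _ (ne_of_gt hN2) (ne_of_gt hn0),
      div_le_div_iff₀ hn2 (mul_pos hN2 hn0)]
    nlinarith [mul_le_mul_of_nonneg_right key hn0.le]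
  calc ((P.card : ℝ)) / (n:ℝ)^2 ≤ q / (n:ℝ)^2 := step0
    _ ≤ q / ((n+s:ℕ):ℝ)^2 + (2*(s:ℝ) + (s:ℝ)^2) / (n:ℝ) := step1

lemma corrLower_shift' (g : X → X) (m s : ℕ) (x : X) (ε : ℝ) :
    corrLower g m (g^[s] x) ε ≤ corrLower g m x ε := by
  by_contra hlt
  push_neg at hlt
  obtain ⟨c, hc1, hc2⟩ := exists_between hlt
  obtain ⟨c', hcc', hc'⟩ := exists_between hc2
  have hev1 : ∀ᶠ n in atTop, c' < corrSum g m (g^[s] x) n ε :=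
    eventually_lt_of_lt_liminf hc' (csum_bddL g m (g^[s] x) ε)
  have hev2 : ∀ᶠ n : ℕ in atTop, (2*(s:ℝ) + (s:ℝ)^2) / (n:ℝ) < c' - c :=
    (err2_tendsto s).eventually_lt_const (by linarith)
  have hev3 : ∀ᶠ n : ℕ in atTop, c ≤ corrSum g m x (n + s) ε := by
    filter_upwards [hev1, hev2, eventually_ge_atTop 1] with n h1 h2 h3
    have := corrSum_shift' (g := g) m s x ε (n := n) (by omega)
    linarith
  have hev4 : ∀ᶠ N : ℕ in atTop, c ≤ corrSum g m x N ε := by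
    rw [eventually_atTop] at hev3 ⊢
    obtain ⟨n0, h0⟩ := hev3
    refine ⟨n0 + s, fun N hN => ?_⟩
    have e : N - s + s = N := by omega
    have := h0 (N - s) (by omega)
    rwa [e] at this
  have : c ≤ corrLower g m x ε := le_liminf_of_le (csum_cobddL g m x ε) hev4
  linarith

lemma corrUpper_shift' (g : X → X) (m s : ℕ) (x : X) (ε : ℝ) :
    corrUpper g m (g^[s] x) ε ≤ corrUpper g m x ε := by
  by_contra hlt
  push_neg at hlt
  obtain ⟨c, hc1, hc2⟩ := exists_between hlt
  obtain ⟨c', hcc', hc'⟩ := exists_between hc2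
  have hfr1 : ∃ᶠ n in atTop, c' < corrSum g m (g^[s] x) n ε :=
    frequently_lt_of_lt_limsup (csum_cobddU g m (g^[s] x) ε) hc'
  have hev2 : ∀ᶠ n : ℕ in atTop, (2*(s:ℝ) + (s:ℝ)^2) / (n:ℝ) < c' - c :=
    (err2_tendsto s).eventually_lt_const (by linarith)
  have hfr3 : ∃ᶠ n : ℕ in atTop, c ≤ corrSum g m x (n + s) ε := by
    refine (hfr1.and_eventually (hev2.and (eventually_ge_atTop 1))).mono ?_
    rintro n ⟨h1, h2, h3⟩
    have := corrSum_shift' (g := g) m s x ε (n := n) (by omega)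
    linarith
  have hfr4 : ∃ᶠ N : ℕ in atTop, c ≤ corrSum g m x N ε := by
    rw [frequently_atTop] at hfr3 ⊢
    intro N0
    obtain ⟨n, hn, hcn⟩ := hfr3 N0
    exact ⟨n + s, by omega, hcn⟩
  have : c ≤ corrUpper g m x ε := le_limsup_of_frequently_le hfr4 (csum_bddU g m x ε)
  linarith


end AuxLemmas


/-- `entr⁺(f^k, f^h(x)) = entr⁺(f^k, x)` and `entr⁻(f^k, f^h(x)) = entr⁻(f^k, x)`. -/
theorem entr_iterate_point {X : Type*} [MetricSpace X] [CompactSpace X]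
    (f : X → X) (hf : Continuous f) (k h : ℕ) (hk : 0 < k) (hh : 0 < h) (x : X) :
    entrUpper (f^[k]) (f^[h] x) = entrUpper (f^[k]) x ∧
    entrLower (f^[k]) (f^[h] x) = entrLower (f^[k]) x := by
  have hg : Continuous (f^[k]) := hf.iterate k
  have hcomm : ∀ (a : ℕ) (y : X), f^[a] (f^[k] y) = f^[k] (f^[a] y) := fun a y => by
    rw [← Function.iterate_add_apply, ← Function.iterate_add_apply, Nat.add_comm]
  have key : ∀ y : X, (f^[k])^[h] y = f^[h*(k-1)] (f^[h] y) := by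
    intro y
    rw [← Function.iterate_mul, ← Function.iterate_add_apply]
    congr 1
    obtain ⟨k', rfl⟩ : ∃ k', k = k' + 1 := ⟨k - 1, by omega⟩
    simp [Nat.succ_sub_one]
    ring
  have pushU : ∀ (j : ℕ) (y : X), entrUpper (f^[k]) (f^[j] y) ≤ entrUpper (f^[k]) y := by
    intro j y
    unfold entrUpper
    refine entr_le_of_corr (fun m ε => corrLower (f^[k]) m (f^[j] y) ε)
      (fun m ε => corrLower (f^[k]) m y ε) (fun u => Filter.limsup u Filter.atTop)
      (fun u v huv => limsup_le_limsup (Filter.Eventually.of_forall huv))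
      (fun m _ _ hd => corrLower_mono_eps _ m y hd)
      (fun m _ hδ => corrLower_pos hg m hδ y) (fun ε hε => ?_)
    obtain ⟨δ, hδ, H⟩ := corr_push (hf.iterate j) (hcomm j) hε
    exact ⟨δ, hδ, fun m => corrLower_le_of_forall (fun n => H m y n)⟩
  have pushL : ∀ (j : ℕ) (y : X), entrLower (f^[k]) (f^[j] y) ≤ entrLower (f^[k]) y := by
    intro j y
    unfold entrLower
    refine entr_le_of_corr (fun m ε => corrUpper (f^[k]) m (f^[j] y) ε)
      (fun m ε => corrUpper (f^[k]) m y ε) (fun u => Filter.liminf u Filter.atTop)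
      (fun u v huv => liminf_le_liminf (Filter.Eventually.of_forall huv))
      (fun m _ _ hd => corrUpper_mono_eps _ m y hd)
      (fun m _ hδ => corrUpper_pos hg m hδ y) (fun ε hε => ?_)
    obtain ⟨δ, hδ, H⟩ := corr_push (hf.iterate j) (hcomm j) hε
    exact ⟨δ, hδ, fun m => corrUpper_le_of_forall (fun n => H m y n)⟩
  have shiftU : ∀ (s : ℕ) (y : X),
      entrUpper (f^[k]) y ≤ entrUpper (f^[k]) ((f^[k])^[s] y) := by
    intro s y
    unfold entrUpper
    refine entr_le_of_corr (fun m ε => corrLower (f^[k]) m y ε)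
      (fun m ε => corrLower (f^[k]) m ((f^[k])^[s] y) ε) (fun u => Filter.limsup u Filter.atTop)
      (fun u v huv => limsup_le_limsup (Filter.Eventually.of_forall huv))
      (fun m _ _ hd => corrLower_mono_eps _ m _ hd)
      (fun m _ hδ => corrLower_pos hg m hδ _)
      (fun ε hε => ⟨ε, hε, fun m => corrLower_shift' (f^[k]) m s y ε⟩)
  have shiftL : ∀ (s : ℕ) (y : X),
      entrLower (f^[k]) y ≤ entrLower (f^[k]) ((f^[k])^[s] y) := by
    intro s y
    unfold entrLower
    refine entr_le_of_corr (fun m ε => corrUpper (f^[k]) m y ε)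
      (fun m ε => corrUpper (f^[k]) m ((f^[k])^[s] y) ε) (fun u => Filter.liminf u Filter.atTop)
      (fun u v huv => liminf_le_liminf (Filter.Eventually.of_forall huv))
      (fun m _ _ hd => corrUpper_mono_eps _ m _ hd)
      (fun m _ hδ => corrUpper_pos hg m hδ _)
      (fun ε hε => ⟨ε, hε, fun m => corrUpper_shift' (f^[k]) m s y ε⟩)
  constructor
  · refine le_antisymm (pushU h x) ?_
    have h1 := shiftU h x
    rw [key x] at h1
    exact h1.trans (pushU (h*(k-1)) (f^[h] x))
  · refine le_antisymm (pushL h x) ?_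
    have h1 := shiftL h x
    rw [key x] at h1
    exact h1.trans (pushL (h*(k-1)) (f^[h] x))
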